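/- Let d, n be positive integers with d ≤ n ≤ d²/4 − (3/2)·d − 1. Then there exists a matrix X ∈ 𝔹_{≠0}^{d×n} such that C_P(X) < C_D(X). Symmetrically, if n ≤ d ≤ n²/4 − (3/2)·n − 1, then there exists a matrix X ∈ 𝔹_{≠0}^{d×n} such that C_D(X) < C_P(X). -/

import Mathlib

/-- `X ∈ 𝔹_{≠0}^{d×n}`: entries in `{-1,0,1}`, no zero row, no zero column. -/
def SignBinaryNZ {d n : ℕ} (X : Matrix (Fin d) (Fin n) ℝ) : Prop :=
  (∀ i j, X i j = -1 ∨ X i j = 0 ∨ X i j = 1) ∧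
  (∀ i, ∃ j, X i j ≠ 0) ∧ (∀ j, ∃ i, X i j ≠ 0)

/-- `C_P(X) = Σ_i ‖X_{i:}‖₀²` (for binary matrices). -/
noncomputable def CPbin {d n : ℕ} (X : Matrix (Fin d) (Fin n) ℝ) : ℝ :=
  ∑ i, ((Finset.univ.filter fun j => X i j ≠ 0).card : ℝ) ^ 2

/-- `C_D(X) = Σ_j ‖X_{:j}‖₀²` (for binary matrices). -/
noncomputable def CDbin {d n : ℕ} (X : Matrix (Fin d) (Fin n) ℝ) : ℝ :=
  ∑ j, ((Finset.univ.filter fun i => X i j ≠ 0).card : ℝ) ^ 2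

lemma keyR (d h k r c m n q : ℝ)
    (e1 : d = 2*h ∨ d = 2*h+1) (hh : 5 ≤ h)
    (hr0 : 0 ≤ r) (hr1 : r ≤ d-1) (hn : n = d*k - r)
    (hc : c = h - k) (hm : m = n - c) (hc1 : 1 ≤ c)
    (hq0 : d*q ≤ m) (hq1 : m ≤ d*q + d - 1)
    (hb : 4*n ≤ d^2-6*d-4) (hdn : d ≤ n) :
    (c+q+1)*(d*c+m) < c*d^2 + m := by
  have hd0 : (0:ℝ) < d := by rcases e1 with e|e <;> linarith
  have hT : 0 ≤ d*c + m := by nlinarith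
  have key2 : (d*c+m+d)*(d*c+m) < d*(c*d^2+m) := by
    subst hc hm hn
    rcases e1 with e|e <;> subst e <;>
      nlinarith [sq_nonneg (k-r), sq_nonneg (h-2*k), mul_nonneg hr0 hr0,
        sq_nonneg ((2*h)*k-r-2*h), sq_nonneg ((2*h+1)*k-r-(2*h+1)),
        mul_pos (show (0:ℝ)<h by linarith) (show (0:ℝ)<h by linarith),
        sq_nonneg (h-2*k+2), mul_nonneg (sub_nonneg.2 hr1) hr0]
  have step : d*((c+q+1)*(d*c+m)) ≤ (d*c+m+d)*(d*c+m) := by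
    nlinarith [mul_nonneg (sub_nonneg.2 hq0) hT]
  have h2 : d*((c+q+1)*(d*c+m)) < d*(c*d^2+m) := step.trans_lt key2
  exact lt_of_mul_lt_mul_left h2 (le_of_lt hd0)

lemma mainlem (d n : ℕ) (hdn : d ≤ n) (hb : 4*n + 6*d + 4 ≤ d^2) :
    ∃ X : Matrix (Fin d) (Fin n) ℝ, SignBinaryNZ X ∧ CPbin X < CDbin X := by
  have hdd : d^2 = d*d := sq d
  have hd11 : 11 ≤ d := by
    by_contra hcon
    push_neg at hcon
    interval_cases d <;> omega
  have hd0 : 0 < d := by omega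
  obtain ⟨h, hh1, hh2⟩ : ∃ h, 2*h ≤ d ∧ d ≤ 2*h+1 := ⟨d/2, by omega, by omega⟩
  obtain ⟨k, hk1, hk2⟩ : ∃ k, n ≤ d*k ∧ d*k ≤ n+d-1 := by
    refine ⟨(n+d-1)/d, ?_, ?_⟩ <;>
    · have ek := Nat.div_add_mod (n+d-1) d
      have emod : (n+d-1) % d < d := Nat.mod_lt _ hd0
      omega
  have hkh : k + 1 ≤ h := by
    by_contra hcon
    push_neg at hcon
    have h1 : d*h ≤ d*k := Nat.mul_le_mul_left d (by omega)
    have h2 : d*d ≤ d*(2*h+1) := Nat.mul_le_mul_left d (by omega)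
    have h3 : d*(2*h+1) = 2*(d*h) + d := by ring
    omega
  set c := h - k with hcdef
  have hch : c + k = h := by omega
  have hc1 : 1 ≤ c := by omega
  have hcn : c < n := by omega
  set m := n - c with hmdef
  have hmc : m + c = n := by omega
  obtain ⟨q, hq0, hq1⟩ : ∃ q, d*q ≤ m ∧ m < d*q + d := by
    refine ⟨m/d, ?_, ?_⟩ <;>
    · have ek := Nat.div_add_mod m d
      have emod : m % d < d := Nat.mod_lt _ hd0
      omega
  -- the matrix
  set X : Matrix (Fin d) (Fin n) ℝ := Matrix.of fun i j =>
    if (j:ℕ) < c then 1 else if ((j:ℕ) - c) % d = (i:ℕ) then 1 else 0 with hX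
  have hXmem : ∀ (i : Fin d) (j : Fin n),
      X i j ≠ 0 ↔ ((j:ℕ) < c ∨ (¬ (j:ℕ) < c ∧ ((j:ℕ) - c) % d = (i:ℕ))) := by
    intro i j
    simp only [hX, Matrix.of_apply]
    split_ifs with h1 h2
    · simp [h1]
    · simp [h1, h2]
    · simp [h1, h2]
  refine ⟨X, ⟨?_, ?_, ?_⟩, ?_⟩
  · intro i j
    simp only [hX, Matrix.of_apply]
    split_ifs <;> simp
  · intro i
    refine ⟨⟨0, by omega⟩, ?_⟩
    rw [hXmem]
    left; simpa using (show 0 < c by omega)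
  · intro j
    by_cases hj : (j:ℕ) < c
    · exact ⟨⟨0, hd0⟩, by rw [hXmem]; left; exact hj⟩
    · refine ⟨⟨((j:ℕ) - c) % d, Nat.mod_lt _ hd0⟩, ?_⟩
      rw [hXmem]; right; exact ⟨hj, rfl⟩
  -- counting
  have cardlt : (Finset.univ.filter fun j : Fin n => (j:ℕ) < c).card = c := by
    have hemb : (Finset.univ.filter fun j : Fin n => (j:ℕ) < c)
        = Finset.map (Fin.castLEEmb hcn.le) Finset.univ := by
      ext j
      simp only [Finset.mem_filter, Finset.mem_univ, true_and, Finset.mem_map,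
        Fin.castLEEmb_apply]
      constructor
      · intro hj; exact ⟨⟨(j:ℕ), hj⟩, rfl⟩
      · rintro ⟨i, rfl⟩; exact i.2
    rw [hemb, Finset.card_map, Finset.card_univ, Fintype.card_fin]
  have hcompl : (Finset.univ.filter fun j : Fin n => ¬ (j:ℕ) < c).card = m := by
    have h1 := Finset.card_filter_add_card_filter_not
      (s := (Finset.univ : Finset (Fin n))) (p := fun j : Fin n => (j:ℕ) < c)
    rw [cardlt, Finset.card_univ, Fintype.card_fin] at h1
    omega
  -- column cards
  have colcard : ∀ j : Fin n,
      (Finset.univ.filter fun i : Fin d => X i j ≠ 0).card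
        = if (j:ℕ) < c then d else 1 := by
    intro j
    by_cases hj : (j:ℕ) < c
    · rw [if_pos hj, Finset.filter_true_of_mem, Finset.card_univ, Fintype.card_fin]
      intro i _
      rw [hXmem]; left; exact hj
    · rw [if_neg hj]
      have heq : (Finset.univ.filter fun i : Fin d => X i j ≠ 0)
          = {⟨((j:ℕ) - c) % d, Nat.mod_lt _ hd0⟩} := by
        ext i
        simp only [Finset.mem_filter, Finset.mem_univ, true_and, Finset.mem_singleton,
          hXmem i j, hj, false_or]
        constructor
        · rintro ⟨-, hmod⟩; exact Fin.ext hmod.symm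
        · rintro rfl; exact ⟨not_false, rfl⟩
      rw [heq, Finset.card_singleton]
  -- CD value
  have hCD : CDbin X = (c:ℝ) * (d:ℝ)^2 + (m:ℝ) := by
    unfold CDbin
    have hterm : ∀ j : Fin n,
        ((Finset.univ.filter fun i : Fin d => X i j ≠ 0).card : ℝ) ^ 2
          = if (j:ℕ) < c then ((d:ℝ))^2 else 1 := by
      intro j
      rw [colcard j]
      split_ifs <;> norm_num
    rw [Finset.sum_congr rfl fun j _ => hterm j, Finset.sum_ite, Finset.sum_const,
      Finset.sum_const, cardlt, hcompl]
    push_cast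
    ring
  -- row counts
  set A : Fin d → Finset (Fin n) := fun i =>
    Finset.univ.filter fun j : Fin n => ¬((j:ℕ) < c) ∧ ((j:ℕ)-c) % d = (i:ℕ) with hA
  have rowsplit : ∀ i : Fin d,
      (Finset.univ.filter fun j : Fin n => X i j ≠ 0).card = c + (A i).card := by
    intro i
    have hun : (Finset.univ.filter fun j : Fin n => X i j ≠ 0)
        = (Finset.univ.filter fun j : Fin n => (j:ℕ) < c) ∪ A i := by
      ext j
      simp only [hA, Finset.mem_filter, Finset.mem_univ, true_and, Finset.mem_union,
        hXmem i j]
    have hdisj : Disjoint (Finset.univ.filter fun j : Fin n => (j:ℕ) < c) (A i) := by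
      rw [Finset.disjoint_left]
      intro j hj1 hj2
      simp only [hA, Finset.mem_filter] at hj1 hj2
      exact hj2.2.1 hj1.2
    rw [hun, Finset.card_union_of_disjoint hdisj, cardlt]
  have hsumA : ∑ i : Fin d, (A i).card = m := by
    have hfib := Finset.card_eq_sum_card_fiberwise
      (f := fun j : Fin n => (⟨((j:ℕ)-c) % d, Nat.mod_lt _ hd0⟩ : Fin d))
      (s := Finset.univ.filter fun j : Fin n => ¬ (j:ℕ) < c) (t := Finset.univ)
      (fun x _ => Finset.mem_univ _)
    rw [hcompl] at hfib
    rw [hfib]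
    refine Finset.sum_congr rfl fun i _ => ?_
    congr 1
    ext j
    simp only [hA, Finset.mem_filter, Finset.mem_univ, true_and, Fin.ext_iff,
      Finset.filter_filter]
    try tauto
  have hAle : ∀ i : Fin d, (A i).card ≤ q + 1 := by
    intro i
    have hcard : (Finset.range (q+1)).card = q + 1 := Finset.card_range _
    rw [← hcard]
    apply Finset.card_le_card_of_injOn (fun j : Fin n => ((j:ℕ)-c)/d)
    · intro j hj
      simp only [hA, Finset.mem_coe, Finset.mem_filter, Finset.mem_univ, true_and] at hj
      simp only [Finset.mem_coe, Finset.mem_range]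
      rw [Nat.div_lt_iff_lt_mul hd0]
      have hj2 := j.2
      have hring : (q+1)*d = d*q+d := by ring
      omega
    · intro j1 h1 j2 h2 heq
      simp only [hA, Finset.coe_filter, Set.mem_setOf_eq, Finset.mem_univ, true_and] at h1 h2
      obtain ⟨hc1', hm1⟩ := h1
      obtain ⟨hc2', hm2⟩ := h2
      have heq' : ((j1:ℕ)-c)/d = ((j2:ℕ)-c)/d := heq
      have e1 := Nat.div_add_mod ((j1:ℕ)-c) d
      have e2 := Nat.div_add_mod ((j2:ℕ)-c) d
      rw [heq'] at e1
      apply Fin.ext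
      omega
  -- CP bound
  have hCP : CPbin X ≤ ((c:ℝ)+(q:ℝ)+1) * ((d:ℝ)*(c:ℝ) + (m:ℝ)) := by
    unfold CPbin
    have hb1 : ∀ i : Fin d, ((Finset.univ.filter fun j => X i j ≠ 0).card : ℝ)^2
        ≤ ((c + (A i).card : ℕ) : ℝ) * ((c:ℝ)+(q:ℝ)+1) := by
      intro i
      rw [rowsplit i]
      have hle : ((A i).card : ℝ) ≤ (q:ℝ)+1 := by exact_mod_cast hAle i
      have h2 : (0:ℝ) ≤ ((c + (A i).card : ℕ) : ℝ) := Nat.cast_nonneg _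
      push_cast at h2 ⊢
      nlinarith
    calc (∑ i : Fin d, ((Finset.univ.filter fun j => X i j ≠ 0).card : ℝ)^2)
        ≤ ∑ i : Fin d, ((c + (A i).card : ℕ) : ℝ) * ((c:ℝ)+(q:ℝ)+1) :=
          Finset.sum_le_sum fun i _ => hb1 i
      _ = (∑ i : Fin d, ((c + (A i).card : ℕ) : ℝ)) * ((c:ℝ)+(q:ℝ)+1) :=
          (Finset.sum_mul _ _ _).symm
      _ = ((c:ℝ)+(q:ℝ)+1) * ((d:ℝ)*(c:ℝ) + (m:ℝ)) := by
          have hsum2 : (∑ i : Fin d, (c + (A i).card)) = d*c + m := by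
            rw [Finset.sum_add_distrib, Finset.sum_const, hsumA, smul_eq_mul,
              Finset.card_univ, Fintype.card_fin]
          rw [← Nat.cast_sum, hsum2]
          push_cast
          ring
  -- conclude
  rw [hCD]
  refine lt_of_le_of_lt hCP ?_
  obtain ⟨r, hr⟩ : ∃ r, n + r = d*k ∧ r + 1 ≤ d := ⟨d*k - n, by omega, by omega⟩
  have hh5 : 5 ≤ h := by omega
  have e1 : (d:ℝ) = 2*(h:ℝ) ∨ (d:ℝ) = 2*(h:ℝ)+1 := by
    rcases (show d = 2*h ∨ d = 2*h+1 by omega) with e | e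
    · left; exact_mod_cast congrArg (Nat.cast : ℕ → ℝ) e
    · right; push_cast [e]; ring
  exact keyR (d:ℝ) (h:ℝ) (k:ℝ) (r:ℝ) (c:ℝ) (m:ℝ) (n:ℝ) (q:ℝ) e1
    (by exact_mod_cast hh5) (by positivity)
    (by have := hr.2; push_cast; linarith [(show ((r:ℝ)+1) ≤ (d:ℝ) by exact_mod_cast hr.2)])
    (by have := hr.1; push_cast; linarith [(show ((n:ℝ)+(r:ℝ)) = (d:ℝ)*(k:ℝ) by exact_mod_cast hr.1)])
    (by push_cast; linarith [(show ((c:ℝ)+(k:ℝ)) = (h:ℝ) by exact_mod_cast hch)])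
    (by push_cast; linarith [(show ((m:ℝ)+(c:ℝ)) = (n:ℝ) by exact_mod_cast hmc)])
    (by exact_mod_cast hc1)
    (by exact_mod_cast hq0)
    (by linarith [(show ((m:ℝ)+1) ≤ (d:ℝ)*(q:ℝ)+(d:ℝ) by exact_mod_cast hq1)])
    (by linarith [(show ((4*n:ℕ):ℝ)+((6*d:ℕ):ℝ)+4 ≤ ((d^2:ℕ):ℝ) by exact_mod_cast hb), (show ((4*n:ℕ):ℝ) = 4*(n:ℝ) by push_cast; ring), (show ((6*d:ℕ):ℝ) = 6*(d:ℝ) by push_cast; ring), (show ((d^2:ℕ):ℝ) = (d:ℝ)^2 by push_cast; ring)])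
    (by exact_mod_cast hdn)


/-- **Theorem 5.5.** If `d ≤ n ≤ d²/4 − (3/2)d − 1` then some `X ∈ 𝔹_{≠0}^{d×n}` has
`C_P(X) < C_D(X)`; symmetrically if `n ≤ d ≤ n²/4 − (3/2)n − 1` then some
`X ∈ 𝔹_{≠0}^{d×n}` has `C_D(X) < C_P(X)`. -/
theorem stmt_9 (d n : ℕ) (hd : 0 < d) (hn : 0 < n) :
    (d ≤ n → (n : ℝ) ≤ (d : ℝ) ^ 2 / 4 - (3 / 2) * (d : ℝ) - 1 →
      ∃ X : Matrix (Fin d) (Fin n) ℝ, SignBinaryNZ X ∧ CPbin X < CDbin X) ∧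
    (n ≤ d → (d : ℝ) ≤ (n : ℝ) ^ 2 / 4 - (3 / 2) * (n : ℝ) - 1 →
      ∃ X : Matrix (Fin d) (Fin n) ℝ, SignBinaryNZ X ∧ CDbin X < CPbin X) := by
  constructor
  · intro h1 h2
    refine mainlem d n h1 ?_
    have hR : ((4*n+6*d+4 : ℕ) : ℝ) ≤ ((d^2 : ℕ) : ℝ) := by push_cast; linarith
    exact_mod_cast hR
  · intro h1 h2
    have hN : 4*d + 6*n + 4 ≤ n^2 := by
      have hR : ((4*d+6*n+4 : ℕ) : ℝ) ≤ ((n^2 : ℕ) : ℝ) := by push_cast; linarith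
      exact_mod_cast hR
    obtain ⟨X, hSB, hlt⟩ := mainlem n d h1 hN
    refine ⟨Matrix.of fun i j => X j i, ⟨fun i j => hSB.1 j i, hSB.2.2, hSB.2.1⟩, ?_⟩
    have e1 : CDbin (Matrix.of fun (i : Fin d) (j : Fin n) => X j i) = CPbin X := rfl
    have e2 : CPbin (Matrix.of fun (i : Fin d) (j : Fin n) => X j i) = CDbin X := rfl
    rw [e1, e2]
    exact hlt
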